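/- Let G be a subgroup of Homeo₊(S¹) admitting a G-invariant Borel probability measure on S¹ (this holds in particular whenever G is amenable, e.g. nilpotent or solvable). If every element of G has a non-empty fixed-point set, then G has a global fixed point, i.e. Fix(G) = ∩_{φ∈G} Fix(φ) ≠ ∅. Indeed, for any G-invariant Borel probability measure μ one has supp(μ) ⊆ Fix(G). -/

import Mathlib

open MeasureTheory

noncomputable section

/-- The group of self-homeomorphisms of a topological space. -/
noncomputable instance homeoGroup {X : Type*} [TopologicalSpace X] : Group (X ≃ₜ X) where
  mul f g := g.trans f
  one := Homeomorph.refl X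
  inv := Homeomorph.symm
  mul_assoc _ _ _ := Homeomorph.ext fun _ => rfl
  one_mul _ := Homeomorph.ext fun _ => rfl
  mul_one _ := Homeomorph.ext fun _ => rfl
  inv_mul_cancel f := Homeomorph.ext f.symm_apply_apply

/-- The circle ℝ/ℤ. -/
abbrev S1 : Type := AddCircle (1 : ℝ)

/-- The support of a measure: points all whose neighbourhoods have positive measure. -/
def measSupport {X : Type*} [TopologicalSpace X] [MeasurableSpace X] (μ : Measure X) :
    Set X := {x | ∀ U ∈ nhds x, μ U ≠ 0}

/-- An orientation-preserving circle homeomorphism: it admits a continuous strictly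
increasing lift `F : ℝ → ℝ` commuting with the unit translation. -/
def OrientationPreservingCircle (f : S1 → S1) : Prop :=
  ∃ F : ℝ → ℝ, Continuous F ∧ StrictMono F ∧ (∀ x, F (x + 1) = F x + 1) ∧
    ∀ x : ℝ, ((F x : S1)) = f ↑x

open Set Filter

namespace Stmt18Aux

local instance : Fact ((0:ℝ) < 1) := ⟨one_pos⟩

local instance : Fact ((0:ℝ) < 1) := ⟨one_pos⟩

lemma lift_int {F : ℝ → ℝ} (h : ∀ x, F (x + 1) = F x + 1) (x : ℝ) (n : ℤ) :
    F (x + n) = F x + n := by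
  induction n using Int.induction_on with
  | zero => simp
  | succ k ih =>
    have h2 := h (x + k)
    push_cast
    push_cast at ih
    rw [show x + ((k:ℝ) + 1) = x + k + 1 by ring, h2, ih]; ring
  | pred k ih =>
    have h2 := h (x + (-(k:ℝ) - 1))
    push_cast
    push_cast at ih
    rw [show x + (-(k:ℝ) - 1) + 1 = x + -(k:ℝ) by ring, ih] at h2
    rw [show x + (-(k:ℝ)-1) = x + (-(k:ℝ) - 1) by ring]
    linarith

lemma fixpt_zpow (g : ℝ ≃o ℝ) (y : ℝ) (hy : g y = y) : ∀ n : ℤ, (g ^ n) y = y := by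
  have hinv : g⁻¹ y = y := by conv_lhs => rw [← hy]; skip
                              exact g.symm_apply_apply y
  intro n
  induction n using Int.induction_on with
  | zero => rfl
  | succ k ih => rw [zpow_add_one, RelIso.mul_apply, hy, ih]
  | pred k ih => rw [zpow_sub_one, RelIso.mul_apply, hinv, ih]

lemma image_coe_eq (r₀ : ℝ) (s : Set ℝ) (hs : s ⊆ Ico r₀ (r₀ + 1)) :
    ((↑) : ℝ → S1) '' s
      = (fun x : S1 => ((AddCircle.measurableEquivIco (T := 1) r₀ x : ℝ))) ⁻¹' s := by
  set E := AddCircle.measurableEquivIco (T := 1) r₀ with hE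
  have hsymm : ∀ y : Ico r₀ (r₀ + 1), E.symm y = ((y : ℝ) : S1) := fun y => rfl
  ext x
  constructor
  · rintro ⟨u, hu, rfl⟩
    have h1 : E.symm (E ((u : ℝ) : S1)) = E.symm ⟨u, hs hu⟩ := by
      rw [E.symm_apply_apply, hsymm]
    have h2 : E ((u : ℝ) : S1) = ⟨u, hs hu⟩ := E.symm.toEquiv.injective h1
    show ((E ((u:ℝ):S1) : ℝ)) ∈ s
    rw [h2]; exact hu
  · intro hx
    refine ⟨(E x : ℝ), hx, ?_⟩
    rw [← hsymm (E x), E.symm_apply_apply]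



lemma key (μ : Measure S1) [IsProbabilityMeasure μ]
    (Ψ : S1 ≃ₜ S1) (hΨ : MeasurePreserving (⇑Ψ) μ μ)
    (f : ℝ ≃o ℝ) (hlift : ∀ s : ℝ, (((f s : ℝ) : S1)) = Ψ ↑s)
    (r₀ : ℝ) (h0 : f r₀ = r₀) (h1 : f (r₀ + 1) = r₀ + 1)
    (t : ℝ) (ht : t ∈ Ioo r₀ (r₀ + 1)) (hft : t < f t) :
    ((t : S1)) ∉ measSupport μ := by
  set E := AddCircle.measurableEquivIco (T := 1) r₀ with hE
  set a : ℤ → ℝ := fun n => (f ^ n) t with ha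
  have ha0 : a 0 = t := rfl
  have hstep : ∀ n : ℤ, a (n + 1) = f (a n) := by
    intro n
    show (f ^ (n + 1)) t = f ((f ^ n) t)
    rw [add_comm, zpow_one_add, RelIso.mul_apply]
  have hmono : StrictMono a := by
    apply strictMono_int_of_lt_succ
    intro n
    have h2 : a (n + 1) = (f ^ n) (f t) := by
      show (f ^ (n + 1)) t = (f ^ n) (f t)
      rw [zpow_add_one, RelIso.mul_apply]
    rw [h2]
    exact (f ^ n).strictMono hft
  have hbound : ∀ n : ℤ, a n ∈ Ioo r₀ (r₀ + 1) := by
    intro n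
    constructor
    · calc r₀ = (f ^ n) r₀ := (fixpt_zpow f r₀ h0 n).symm
        _ < (f ^ n) t := (f ^ n).strictMono ht.1
    · calc (f ^ n) t < (f ^ n) (r₀ + 1) := (f ^ n).strictMono ht.2
        _ = r₀ + 1 := fixpt_zpow f (r₀ + 1) h1 n
  set B : ℤ → Set S1 := fun n => ((↑) : ℝ → S1) '' Ico (a n) (a (n + 1)) with hB
  have hsub : ∀ n : ℤ, Ico (a n) (a (n + 1)) ⊆ Ico r₀ (r₀ + 1) :=
    fun n => Ico_subset_Ico (hbound n).1.le (hbound (n + 1)).2.le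
  have hBrep : ∀ n : ℤ, B n = (fun x : S1 => ((E x : ℝ))) ⁻¹' Ico (a n) (a (n + 1)) :=
    fun n => image_coe_eq r₀ _ (hsub n)
  have hmeasfun : Measurable fun x : S1 => ((E x : ℝ)) :=
    measurable_subtype_coe.comp E.measurable
  have hmeasB : ∀ n : ℤ, MeasurableSet (B n) := by
    intro n; rw [hBrep]; exact hmeasfun measurableSet_Ico
  have hdisj : Pairwise (Function.onFun Disjoint B) := by
    intro m n hmn
    have hIco : Disjoint (Ico (a m) (a (m + 1))) (Ico (a n) (a (n + 1))) := by
      apply Set.Ico_disjoint_Ico.mpr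
      rcases hmn.lt_or_gt with h | h
      · exact le_trans (min_le_left _ _) (le_trans (hmono.monotone (by omega)) (le_max_right _ _))
      · exact le_trans (min_le_right _ _) (le_trans (hmono.monotone (by omega)) (le_max_left _ _))
    rw [Function.onFun, hBrep, hBrep]
    exact hIco.preimage _
  have hpush : ∀ n : ℤ, B (n + 1) = ⇑Ψ '' B n := by
    intro n
    have hIm : Ico (a (n + 1)) (a (n + 1 + 1)) = f '' Ico (a n) (a (n + 1)) := by
      rw [f.image_Ico, ← hstep n, ← hstep (n + 1)]
    calc B (n + 1) = ((↑) : ℝ → S1) '' (f '' Ico (a n) (a (n + 1))) := by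
          rw [show B (n + 1) = ((↑) : ℝ → S1) '' Ico (a (n + 1)) (a (n + 1 + 1)) from rfl, hIm]
      _ = (fun u : ℝ => ((f u : ℝ) : S1)) '' Ico (a n) (a (n + 1)) := by
          rw [image_image]
      _ = (fun u : ℝ => Ψ ((u : S1))) '' Ico (a n) (a (n + 1)) := by
          simp only [hlift]
      _ = ⇑Ψ '' B n := by rw [hB, image_image]
  have hΨsymm : MeasurePreserving (⇑Ψ.symm) μ μ :=
    MeasurePreserving.symm Ψ.toMeasurableEquiv hΨ
  have hμstep : ∀ n : ℤ, μ (B (n + 1)) = μ (B n) := by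
    intro n
    rw [hpush n, Set.image_eq_preimage_of_inverse Ψ.symm_apply_apply Ψ.apply_symm_apply]
    exact hΨsymm.measure_preimage (hmeasB n).nullMeasurableSet
  have hμeq : ∀ n : ℤ, μ (B n) = μ (B 0) := by
    intro n
    induction n using Int.induction_on with
    | zero => rfl
    | succ k ih => rw [hμstep k, ih]
    | pred k ih =>
      have := hμstep (-(k:ℤ) - 1)
      rw [show -(k:ℤ) - 1 + 1 = -(k:ℤ) by ring] at this
      rw [← this, ih]
  have hzero : μ (B 0) = 0 := by
    by_contra hc
    have hU : μ (⋃ n : ℤ, B n) = ∑' n : ℤ, μ (B n) := measure_iUnion hdisj hmeasB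
    rw [tsum_congr hμeq, ENNReal.tsum_const_eq_top_of_ne_zero hc] at hU
    have hle : μ (⋃ n : ℤ, B n) ≤ 1 := by
      calc μ (⋃ n : ℤ, B n) ≤ μ univ := measure_mono (subset_univ _)
        _ = 1 := measure_univ
    rw [hU] at hle
    simp at hle
  intro hsupp
  have htIoo : t ∈ Ioo (a (-1)) (a 1) := by
    constructor
    · rw [← ha0]; exact hmono (by omega)
    · rw [← ha0]; exact hmono (by omega)
  have hUopen : IsOpen (((↑) : ℝ → S1) '' Ioo (a (-1)) (a 1)) :=
    QuotientAddGroup.isOpenMap_coe _ isOpen_Ioo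
  have hUnhds : ((↑) : ℝ → S1) '' Ioo (a (-1)) (a 1) ∈ nhds ((t : S1)) :=
    hUopen.mem_nhds ⟨t, htIoo, rfl⟩
  have hUsub : ((↑) : ℝ → S1) '' Ioo (a (-1)) (a 1) ⊆ B (-1) ∪ B 0 := by
    rintro x ⟨u, hu, rfl⟩
    rcases lt_or_ge u (a 0) with h | h
    · exact Or.inl ⟨u, ⟨hu.1.le, show u < a (-1 + 1) by rw [show (-1:ℤ) + 1 = 0 by ring]; exact h⟩, rfl⟩
    · exact Or.inr ⟨u, ⟨h, show u < a (0 + 1) by rw [show (0:ℤ) + 1 = 1 by ring]; exact hu.2⟩, rfl⟩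
  have hμU : μ (((↑) : ℝ → S1) '' Ioo (a (-1)) (a 1)) = 0 := by
    have h2 : μ (B (-1) ∪ B 0) = 0 := by
      have hle := measure_union_le (μ := μ) (B (-1)) (B 0)
      rw [hμeq (-1), hzero] at hle
      exact le_antisymm (by simpa using hle) (zero_le)
    exact le_antisymm (le_trans (measure_mono hUsub) h2.le) (zero_le)
  exact hsupp _ hUnhds hμU

lemma coe_sub_int (y : ℝ) (m : ℤ) : (((y - (m:ℝ)) : ℝ) : S1) = (y : S1) := by
  apply (QuotientAddGroup.eq).mpr
  refine AddSubgroup.mem_zmultiples_iff.mpr ⟨m, ?_⟩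
  rw [zsmul_eq_mul, mul_one]
  ring

lemma fix_of_support (μ : Measure S1) [IsProbabilityMeasure μ]
    (ψ : S1 ≃ₜ S1) (horr : OrientationPreservingCircle (⇑ψ))
    (hinv : MeasurePreserving (⇑ψ) μ μ) (hfx : ∃ x : S1, ψ x = x)
    (x : S1) (hx : x ∈ measSupport μ) : ψ x = x := by
  obtain ⟨F, hFc, hFm, hF1, hFlift⟩ := horr
  obtain ⟨x₀, hx₀⟩ := hfx
  obtain ⟨r, hr⟩ := QuotientAddGroup.mk_surjective x₀
  have h1 : ((F r : S1)) = (r : S1) := by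
    rw [hFlift r]
    show ψ ((r : ℝ) : S1) = ((r : ℝ) : S1)
    rw [hr, hx₀]
  obtain ⟨m, hm⟩ : ∃ m : ℤ, F r - r = m := by
    obtain ⟨k, hk⟩ := AddSubgroup.mem_zmultiples_iff.mp ((QuotientAddGroup.eq).mp h1)
    refine ⟨-k, ?_⟩
    have : (k : ℝ) * 1 = -(F r) + r := by rw [← hk]; push_cast [zsmul_eq_mul]; ring
    push_cast
    linarith [this]
  set F' : ℝ → ℝ := fun y => F y - m with hF'
  have hF'1 : ∀ y, F' (y + 1) = F' y + 1 := by
    intro y; simp only [hF', hF1]; ring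
  have hF'int : ∀ (y : ℝ) (n : ℤ), F' (y + n) = F' y + n := lift_int hF'1
  have hF'm : StrictMono F' := fun u v h => by
    simp only [hF']; exact sub_lt_sub_right (hFm h) _
  have hF'c : Continuous F' := hFc.sub continuous_const
  have hF'lift : ∀ y : ℝ, ((F' y : S1)) = ψ ↑y := by
    intro y
    simp only [hF']
    rw [coe_sub_int (F y) m, hFlift y]
  have hF'r : F' r = r := by simp only [hF']; linarith [hm]
  have hF'r1 : F' (r + 1) = r + 1 := by rw [hF'1, hF'r]
  have hsurj : Function.Surjective F' := by
    apply hF'c.surjective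
    · have htop : Tendsto (fun y : ℝ => F' 0 - 1 + y) atTop atTop :=
        tendsto_atTop_add_const_left atTop _ tendsto_id
      refine tendsto_atTop_mono ?_ htop
      · intro y
        have h2 : F' ((0:ℝ) + (⌊y⌋ : ℤ)) = F' 0 + ⌊y⌋ := hF'int 0 ⌊y⌋
        have h3 : F' (0 + (⌊y⌋ : ℝ)) ≤ F' y := hF'm.monotone (by
          simpa using Int.floor_le y)
        have h4 : y - 1 < (⌊y⌋ : ℝ) := Int.sub_one_lt_floor y
        simp only [zero_add] at h2 h3 ⊢
        linarith
    · have hbot : Tendsto (fun y : ℝ => F' 0 + 1 + y) atBot atBot :=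
        tendsto_atBot_add_const_left atBot _ tendsto_id
      refine tendsto_atBot_mono ?_ hbot
      · intro y
        have h2 : F' ((0:ℝ) + ((⌊y⌋ + 1 : ℤ) : ℝ)) = F' 0 + ((⌊y⌋ + 1 : ℤ) : ℝ) :=
          hF'int 0 (⌊y⌋ + 1)
        have h3 : F' y ≤ F' (0 + ((⌊y⌋ + 1 : ℤ) : ℝ)) := hF'm.monotone (by
          push_cast
          simpa using (Int.lt_floor_add_one y).le)
        have h4 : (⌊y⌋ : ℝ) ≤ y := Int.floor_le y
        push_cast at h2 h3
        simp only [zero_add] at h2 h3 ⊢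
        linarith
  set e : ℝ ≃o ℝ := StrictMono.orderIsoOfSurjective F' hF'm hsurj with he
  have hecoe : ∀ y, e y = F' y := fun y => rfl
  by_contra hne
  set t : ℝ := ((AddCircle.equivIco 1 r x : ℝ)) with htdef
  have htmem : t ∈ Ico r (r + 1) := (AddCircle.equivIco 1 r x).2
  have htx : ((t : S1)) = x := (AddCircle.equivIco 1 r).symm_apply_apply x
  have htne : t ≠ r := by
    intro hcon
    apply hne
    have : x = ((r : ℝ) : S1) := by rw [← htx, hcon]
    rw [this, hr, hx₀]
  have htIoo : t ∈ Ioo r (r + 1) := ⟨lt_of_le_of_ne htmem.1 (Ne.symm htne), htmem.2⟩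
  have hlifte : ∀ s : ℝ, (((e s : ℝ) : S1)) = ψ ↑s := fun s => by rw [hecoe]; exact hF'lift s
  have her : e r = r := by rw [hecoe]; exact hF'r
  have her1 : e (r + 1) = r + 1 := by rw [hecoe]; exact hF'r1
  have hetne : e t ≠ t := by
    intro hcon
    apply hne
    rw [← htx, ← hlifte t, hcon]
  rcases hetne.lt_or_gt with hlt | hgt
  · -- e t < t : use ψ.symm and e⁻¹
    have hΨ' : MeasurePreserving (⇑ψ.symm) μ μ :=
      MeasurePreserving.symm ψ.toMeasurableEquiv hinv
    have hlift' : ∀ s : ℝ, (((e⁻¹ s : ℝ) : S1)) = ψ.symm ↑s := by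
      intro s
      have h2 := hlifte (e⁻¹ s)
      rw [RelIso.apply_inv_self] at h2
      rw [h2, Homeomorph.symm_apply_apply]
    have her' : e⁻¹ r = r := by
      conv_lhs => rw [← her]
      exact e.symm_apply_apply r
    have her1' : e⁻¹ (r + 1) = r + 1 := by
      conv_lhs => rw [← her1]
      exact e.symm_apply_apply (r + 1)
    have hgt' : t < e⁻¹ t := by
      have := (e⁻¹ : ℝ ≃o ℝ).strictMono hlt
      rwa [show e⁻¹ (e t) = t from e.symm_apply_apply t] at this
    exact (key μ ψ.symm hΨ' e⁻¹ hlift' r her' her1' t htIoo hgt') (htx ▸ hx)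
  · exact (key μ ψ hinv e hlifte r her her1 t htIoo hgt) (htx ▸ hx)


end Stmt18Aux

open Stmt18Aux in
/-- **Proposition (T1:1:circle).** Let `G` be a subgroup of `Homeo₊(S¹)` admitting a
`G`-invariant Borel probability measure `μ` (e.g. `G` amenable). If every element of
`G` has a fixed point, then `supp(μ) ⊆ Fix(G)`; in particular `Fix(G) ≠ ∅`. -/
theorem stmt_18
    (G : Subgroup (S1 ≃ₜ S1))
    (hor : ∀ ψ ∈ G, OrientationPreservingCircle (⇑ψ))
    (μ : Measure S1) (hprob : IsProbabilityMeasure μ)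
    (hinv : ∀ ψ ∈ G, MeasurePreserving (⇑ψ) μ μ)
    (hfix : ∀ ψ ∈ G, ∃ x : S1, ψ x = x) :
    measSupport μ ⊆ {x : S1 | ∀ ψ ∈ G, ψ x = x} ∧
    {x : S1 | ∀ ψ ∈ G, ψ x = x}.Nonempty := by
  haveI := hprob
  have hfixpart : measSupport μ ⊆ {x : S1 | ∀ ψ ∈ G, ψ x = x} := by
    intro x hx ψ hψ
    exact fix_of_support μ ψ (hor ψ hψ) (hinv ψ hψ) (hfix ψ hψ) x hx
  have hne : (measSupport μ).Nonempty := by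
    by_contra h
    rw [Set.not_nonempty_iff_eq_empty] at h
    have hall : ∀ x : S1, ∃ U, U ∈ nhds x ∧ μ U = 0 := by
      intro x
      have hx : x ∉ measSupport μ := by rw [h]; exact Set.notMem_empty x
      simp only [measSupport, Set.mem_setOf_eq, not_forall] at hx
      obtain ⟨U, hU, hU0⟩ := hx
      exact ⟨U, hU, by simpa using hU0⟩
    choose U hU hU0 using hall
    obtain ⟨s, -, hs⟩ := IsCompact.elim_nhds_subcover isCompact_univ U (fun x _ => hU x)
    have hle : μ Set.univ ≤ ∑ x ∈ s, μ (U x) :=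
      le_trans (measure_mono hs) (measure_biUnion_finset_le s U)
    simp [hU0, measure_univ] at hle
  obtain ⟨x, hx⟩ := hne
  exact ⟨hfixpart, ⟨x, hfixpart hx⟩⟩
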